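/- (Extremal correlation of the Rayleigh mixture.) For every g > 0, ∫_0^∞ 2(1 − Φ(λ)) · (λ/g) e^{−λ²/(2g)} dλ = 1 − √( g/(g+1) ). Equivalently, the extremal correlation function of the Rayleigh-mixed Brown–Resnick model with variogram γ satisfies ρ(h) = 1 − √( γ(h)/(γ(h)+1) ) for all h with γ(h) > 0. -/

import Mathlib

open MeasureTheory Filter Real Set

/-- Standard normal density. -/
noncomputable def stdPdf (t : ℝ) : ℝ := (Real.sqrt (2 * Real.pi))⁻¹ * Real.exp (-(t ^ 2) / 2)

/-- Standard normal CDF. -/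
noncomputable def stdCdf (x : ℝ) : ℝ := ∫ t in Set.Iic x, stdPdf t

lemma stdPdf_eq (t : ℝ) :
    stdPdf t = (Real.sqrt (2 * Real.pi))⁻¹ * Real.exp (-(1/2) * t ^ 2) := by
  rw [stdPdf]; ring_nf

lemma stdPdf_continuous : Continuous stdPdf := by
  unfold stdPdf
  fun_prop

lemma stdPdf_nonneg (t : ℝ) : 0 ≤ stdPdf t :=
  mul_nonneg (inv_nonneg.2 (Real.sqrt_nonneg _)) (Real.exp_nonneg _)

lemma stdPdf_integrable : Integrable stdPdf := by
  have : Integrable (fun t : ℝ => (Real.sqrt (2 * Real.pi))⁻¹ *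
      Real.exp (-(1/2) * t ^ 2)) :=
    (integrable_exp_neg_mul_sq (by norm_num)).const_mul _
  exact this.congr (by filter_upwards with t using (stdPdf_eq t).symm)

lemma integral_stdPdf : ∫ t, stdPdf t = 1 := by
  have h : ∫ t : ℝ, Real.exp (-(1/2) * t ^ 2) = Real.sqrt (Real.pi / (1/2)) :=
    integral_gaussian (1/2)
  simp_rw [stdPdf_eq, integral_const_mul, h]
  rw [show Real.pi / (1/2) = 2 * Real.pi by ring]
  rw [inv_mul_cancel₀]
  positivity

lemma hasDerivAt_stdCdf (x : ℝ) : HasDerivAt stdCdf (stdPdf x) x := by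
  have hrw : stdCdf = fun u => stdCdf 0 + ∫ t in (0:ℝ)..u, stdPdf t := by
    funext u
    rw [← intervalIntegral.integral_Iic_sub_Iic stdPdf_integrable.integrableOn
      stdPdf_integrable.integrableOn]
    unfold stdCdf; ring
  rw [hrw]
  exact ((stdPdf_continuous.integral_hasStrictDerivAt 0 x).hasDerivAt).const_add _

lemma stdCdf_nonneg (x : ℝ) : 0 ≤ stdCdf x :=
  integral_nonneg fun t => stdPdf_nonneg t

lemma stdCdf_le_one (x : ℝ) : stdCdf x ≤ 1 := by
  rw [← integral_stdPdf]
  exact setIntegral_le_integral stdPdf_integrable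
    (Filter.Eventually.of_forall stdPdf_nonneg)

lemma stdCdf_zero : stdCdf 0 = 1/2 := by
  have heven : ∀ t : ℝ, stdPdf (-t) = stdPdf t := by
    intro t; unfold stdPdf; norm_num
  have hsymm : stdCdf 0 = ∫ t in Set.Ioi (0:ℝ), stdPdf t := by
    have h1 := integral_comp_neg_Iic (0:ℝ) stdPdf
    simp only [heven, neg_zero] at h1
    exact h1.symm ▸ rfl
  have hsplit := intervalIntegral.integral_Iic_add_Ioi (b := (0:ℝ))
    stdPdf_integrable.integrableOn stdPdf_integrable.integrableOn
  rw [integral_stdPdf] at hsplit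
  have : stdCdf 0 + stdCdf 0 = 1 := by
    nth_rewrite 2 [hsymm]
    exact hsplit
  linarith

/-- **Extremal correlation of the Rayleigh mixture.** -/
theorem stmt18 (g : ℝ) (hg : 0 < g) :
    ∫ l in Set.Ioi (0 : ℝ),
        2 * (1 - stdCdf l) * (l / g * Real.exp (-(l ^ 2) / (2 * g)))
      = 1 - Real.sqrt (g / (g + 1)) := by
  have hg' : g ≠ 0 := ne_of_gt hg
  set b : ℝ := (g + 1) / (2 * g) with hb
  have hbpos : 0 < b := by positivity
  -- the auxiliary gaussian term
  set h : ℝ → ℝ := fun l => 2 * stdPdf l * Real.exp (-(l ^ 2) / (2 * g)) with hh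
  have hrw : ∀ l : ℝ, h l = (2 * (Real.sqrt (2 * Real.pi))⁻¹) * Real.exp (-b * l ^ 2) := by
    intro l
    have hexp : -(l^2)/2 + -(l^2)/(2*g) = -b*l^2 := by
      rw [hb]; field_simp; ring
    rw [hh]
    simp only [stdPdf]
    rw [show (2:ℝ) * ((Real.sqrt (2*Real.pi))⁻¹ * Real.exp (-(l^2)/2)) *
        Real.exp (-(l^2)/(2*g)) = 2 * (Real.sqrt (2*Real.pi))⁻¹ *
        (Real.exp (-(l^2)/2) * Real.exp (-(l^2)/(2*g))) from by ring,
      ← Real.exp_add, hexp]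
  have hInth : IntegrableOn h (Set.Ioi (0:ℝ)) := by
    apply Integrable.integrableOn
    have : Integrable (fun l : ℝ => (2 * (Real.sqrt (2 * Real.pi))⁻¹) * Real.exp (-b * l ^ 2)) :=
      (integrable_exp_neg_mul_sq hbpos).const_mul _
    exact this.congr (by filter_upwards with l using (hrw l).symm)
  -- the antiderivative
  set F : ℝ → ℝ := fun l => 2 * (1 - stdCdf l) * (-Real.exp (-(l ^ 2) / (2 * g))) with hF
  set f' : ℝ → ℝ := fun l =>
      2 * (1 - stdCdf l) * (l / g * Real.exp (-(l ^ 2) / (2 * g))) + h l with hf'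
  have hderiv : ∀ x : ℝ, HasDerivAt F (f' x) x := by
    intro x
    have h1 : HasDerivAt (fun l : ℝ => 2 * (1 - stdCdf l)) (-(2 * stdPdf x)) x := by
      simpa using (((hasDerivAt_stdCdf x).const_sub 1).const_mul 2)
    have h2 : HasDerivAt (fun l : ℝ => -Real.exp (-(l ^ 2) / (2 * g)))
        (x / g * Real.exp (-(x ^ 2) / (2 * g))) x := by
      have hin : HasDerivAt (fun l : ℝ => -(l ^ 2) / (2 * g)) (-(2 * x) / (2 * g)) x := by
        have := ((hasDerivAt_pow 2 x).neg).div_const (2 * g)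
        simpa using this
      have := (hin.exp).neg
      refine this.congr_deriv ?_
      field_simp
    have := h1.mul h2
    refine this.congr_deriv ?_
    simp only [hf', hh, hF]
    field_simp
    ring
  -- limit of F at infinity
  have hlim : Tendsto F atTop (nhds 0) := by
    have hexp : Tendsto (fun l : ℝ => Real.exp (-(l ^ 2) / (2 * g))) atTop (nhds 0) := by
      apply Real.tendsto_exp_atBot.comp
      apply Tendsto.atBot_div_const (by positivity)
      exact tendsto_neg_atBot_iff.mpr (tendsto_pow_atTop (by norm_num))
    have hlow : Tendsto (fun l : ℝ => -(2 * Real.exp (-(l ^ 2) / (2 * g)))) atTop (nhds 0) := by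
      simpa using (hexp.const_mul 2).neg
    refine tendsto_of_tendsto_of_tendsto_of_le_of_le hlow tendsto_const_nhds ?_ ?_
    · intro l
      simp only [hF, mul_neg, neg_le_neg_iff]
      have h1 : 1 - stdCdf l ≤ 1 := by have := stdCdf_nonneg l; linarith
      have h2 : 0 ≤ Real.exp (-(l ^ 2) / (2 * g)) := Real.exp_nonneg _
      nlinarith
    · intro l
      simp only [hF, mul_neg]
      have h1 : 0 ≤ 1 - stdCdf l := by have := stdCdf_le_one l; linarith
      have h2 : 0 ≤ Real.exp (-(l ^ 2) / (2 * g)) := Real.exp_nonneg _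
      nlinarith
  -- integrability of the main integrand
  have hcCdf : Continuous stdCdf :=
    continuous_iff_continuousAt.2 fun x => (hasDerivAt_stdCdf x).continuousAt
  have hcont : Continuous (fun l : ℝ =>
      2 * (1 - stdCdf l) * (l / g * Real.exp (-(l ^ 2) / (2 * g)))) := by
    fun_prop
  -- integrability of the main integrand
  have hIntMain : IntegrableOn (fun l : ℝ =>
      2 * (1 - stdCdf l) * (l / g * Real.exp (-(l ^ 2) / (2 * g)))) (Set.Ioi (0:ℝ)) := by
    have hbd : Integrable (fun l : ℝ => (2 / g) * (l * Real.exp (-(1/(2*g)) * l ^ 2)))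
        (volume.restrict (Set.Ioi (0:ℝ))) :=
      (((integrable_mul_exp_neg_mul_sq (by positivity : (0:ℝ) < 1/(2*g))).const_mul
        (2 / g)).restrict)
    refine Integrable.mono' hbd hcont.aestronglyMeasurable ?_
    filter_upwards [ae_restrict_mem measurableSet_Ioi] with x hx
    have hx0 : 0 < x := hx
    have h1 : 0 ≤ 1 - stdCdf x := by have := stdCdf_le_one x; linarith
    have h2 : 1 - stdCdf x ≤ 1 := by have := stdCdf_nonneg x; linarith
    have heq : Real.exp (-(1/(2*g)) * x ^ 2) = Real.exp (-(x ^ 2) / (2 * g)) := by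
      congr 1; field_simp
    rw [heq]
    have hepos : 0 ≤ Real.exp (-(x ^ 2) / (2 * g)) := Real.exp_nonneg _
    rw [Real.norm_eq_abs, abs_of_nonneg (by positivity)]
    have : 2 / g * (x * Real.exp (-(x ^ 2) / (2 * g)))
        = 2 * 1 * (x / g * Real.exp (-(x ^ 2) / (2 * g))) := by field_simp
    rw [this]
    gcongr
  have hIntF' : IntegrableOn f' (Set.Ioi (0:ℝ)) := hIntMain.add hInth
  -- FTC on Ioi
  have hFTC : ∫ x in Set.Ioi (0:ℝ), f' x = 0 - F 0 :=
    integral_Ioi_of_hasDerivAt_of_tendsto (hderiv 0).continuousAt.continuousWithinAt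
      (fun x _ => hderiv x) hIntF' hlim
  have hF0 : F 0 = -1 := by
    simp [hF, stdCdf_zero]
    norm_num
  -- value of the gaussian term
  have hInthVal : ∫ l in Set.Ioi (0:ℝ), h l = Real.sqrt (g / (g + 1)) := by
    calc ∫ l in Set.Ioi (0:ℝ), h l
        = ∫ l in Set.Ioi (0:ℝ), (2 * (Real.sqrt (2 * Real.pi))⁻¹) * Real.exp (-b * l ^ 2) := by
          exact setIntegral_congr_fun measurableSet_Ioi fun l _ => hrw l
      _ = (2 * (Real.sqrt (2 * Real.pi))⁻¹) * (Real.sqrt (Real.pi / b) / 2) := by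
          rw [MeasureTheory.integral_const_mul, integral_gaussian_Ioi]
      _ = Real.sqrt ((2 * Real.pi)⁻¹ * (Real.pi / b)) := by
          rw [← Real.sqrt_inv, Real.sqrt_mul (by positivity : (0:ℝ) ≤ (2*Real.pi)⁻¹)]
          ring
      _ = Real.sqrt (g / (g + 1)) := by
          congr 1
          rw [hb]
          have hpi : Real.pi ≠ 0 := Real.pi_ne_zero
          field_simp
  -- put everything together
  have hmain : ∀ l : ℝ, 2 * (1 - stdCdf l) * (l / g * Real.exp (-(l ^ 2) / (2 * g)))
      = f' l - h l := by intro l; simp only [hf']; ring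
  calc ∫ l in Set.Ioi (0:ℝ), 2 * (1 - stdCdf l) * (l / g * Real.exp (-(l ^ 2) / (2 * g)))
      = ∫ l in Set.Ioi (0:ℝ), (f' l - h l) := by
        exact setIntegral_congr_fun measurableSet_Ioi fun l _ => hmain l
    _ = (∫ l in Set.Ioi (0:ℝ), f' l) - ∫ l in Set.Ioi (0:ℝ), h l :=
        integral_sub hIntF' hInth
    _ = 1 - Real.sqrt (g / (g + 1)) := by rw [hFTC, hF0, hInthVal]; ring
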